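/- Let $n, m \in \mathbb{N}$, let $\mathcal{X} \subseteq \{0,1\}^n$ be a nonempty finite set, for each $x \in \mathcal{X}$ let $\mathcal{X}(x) \subseteq \{0,1\}^n$ be nonempty, let $\mathcal{U} \subseteq \mathbb{R}^m$ be a nonempty compact convex set, and let $f : \mathbb{R}^n \times \mathbb{R}^m \to \mathbb{R}$ be continuous, linear in its first argument (i.e. $y \mapsto f(y,c)$ is linear for every $c \in \mathcal{U}$) and concave in its second argument (i.e. $c \mapsto f(y,c)$ is concave for every $y$). Then $\min_{x \in \mathcal{X}} \max_{c \in \mathcal{U}} \min_{y \in \mathcal{X}(x)} f(y,c) \;=\; \min_{x \in \mathcal{X},\; y^{(1)},\ldots,y^{(n+1)} \in \mathcal{X}(x)} \max_{c \in \mathcal{U}} \min_{i = 1,\ldots,n+1} f(y^{(i)},c)$. -/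

import Mathlib

open Set Finset


lemma cube_finite (n : ℕ) : ({x : Fin n → ℝ | ∀ i, x i = 0 ∨ x i = 1}).Finite := by
  have h1 : (Set.pi Set.univ fun _ : Fin n => ({0, 1} : Set ℝ)).Finite :=
    Set.Finite.pi fun _ => (Set.finite_singleton (1 : ℝ)).insert 0
  refine h1.subset ?_
  intro x hx
  rw [Set.mem_pi]
  intro i _
  rcases hx i with h | h <;> simp [h]



lemma fan_lemma {n m : ℕ} {U : Set (Fin m → ℝ)} (hUne : U.Nonempty) (hUcomp : IsCompact U)
    (hUconv : Convex ℝ U) {f : (Fin n → ℝ) → (Fin m → ℝ) → ℝ}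
    (hfcont : Continuous fun p : (Fin n → ℝ) × (Fin m → ℝ) => f p.1 p.2)
    (hfconc : ∀ y : Fin n → ℝ, ConcaveOn ℝ U fun c => f y c)
    (t : Finset (Fin n → ℝ)) (htne : t.Nonempty) :
    ∃ μ : {y // y ∈ t} → ℝ, (∀ k, 0 ≤ μ k) ∧ (∑ k, μ k = 1) ∧
      ∀ c ∈ U, ∑ k, μ k * f (↑k) c
        ≤ sSup ((fun c => sInf ((fun y => f y c) '' ↑t)) '' U) := by
  classical
  obtain ⟨y0, hy0⟩ := htne
  set v : ℝ := sSup ((fun c => sInf ((fun y => f y c) '' ↑t)) '' U) with hv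
  -- boundedness facts
  have hcont : ∀ y : Fin n → ℝ, Continuous fun c => f y c := fun y =>
    hfcont.comp (continuous_const.prodMk continuous_id)
  obtain ⟨c0, hc0U, hc0max'⟩ := hUcomp.exists_isMaxOn hUne (hcont y0).continuousOn
  have hc0max : ∀ c ∈ U, f y0 c ≤ f y0 c0 := fun c hc => hc0max' hc
  have hbddA : BddAbove ((fun c => sInf ((fun y => f y c) '' ↑t)) '' U) := by
    refine ⟨f y0 c0, ?_⟩
    rintro a ⟨c, hc, rfl⟩
    have h1 : sInf ((fun y => f y c) '' ↑t) ≤ f y0 c :=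
      csInf_le (((t.finite_toSet).image _).bddBelow) ⟨y0, hy0, rfl⟩
    exact h1.trans (hc0max c hc)
  have hle : ∀ c ∈ U, sInf ((fun y => f y c) '' ↑t) ≤ v := fun c hc =>
    le_csSup hbddA ⟨c, hc, rfl⟩
  -- the two convex sets
  set C : Set ({y // y ∈ t} → ℝ) := {z | ∃ c ∈ U, ∀ k, z k ≤ f (↑k) c} with hCdef
  set O : Set ({y // y ∈ t} → ℝ) := {z | ∀ k, v < z k} with hOdef
  have hCconv : Convex ℝ C := by
    rintro z1 ⟨c1, hc1, hz1⟩ z2 ⟨c2, hc2, hz2⟩ a b ha hb hab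
    refine ⟨a • c1 + b • c2, hUconv hc1 hc2 ha hb hab, fun k => ?_⟩
    have hcc := (hfconc ↑k).2 hc1 hc2 ha hb hab
    have : a * z1 k + b * z2 k ≤ a * f (↑k) c1 + b * f (↑k) c2 :=
      add_le_add (mul_le_mul_of_nonneg_left (hz1 k) ha)
        (mul_le_mul_of_nonneg_left (hz2 k) hb)
    simpa [smul_eq_mul] using this.trans hcc
  have hOconv : Convex ℝ O := by
    have : O = ⋂ k, {z : {y // y ∈ t} → ℝ | v < z k} := by ext z; simp [hOdef]
    rw [this]
    exact convex_iInter fun k => convex_halfSpace_gt (IsLinearMap.mk (fun a b => rfl)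
      (fun a b => rfl)) v
  have hOopen : IsOpen O := by
    have : O = ⋂ k, (fun z : {y // y ∈ t} → ℝ => z k) ⁻¹' (Set.Ioi v) := by
      ext z; simp [hOdef]
    rw [this]
    exact isOpen_iInter_of_finite fun k => (continuous_apply k).isOpen_preimage _ isOpen_Ioi
  have hdisj : Disjoint O C := by
    rw [Set.disjoint_left]
    rintro z hzO ⟨c, hc, hzC⟩
    have hne : ((fun y => f y c) '' ↑t).Nonempty := ⟨f y0 c, y0, hy0, rfl⟩
    obtain ⟨y, hy, hval⟩ := hne.csInf_mem ((t.finite_toSet).image _)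
    have h1 : v < f y c := lt_of_lt_of_le (hzO ⟨y, hy⟩) (hzC ⟨y, hy⟩)
    have h2 : f y c ≤ v := le_trans (le_of_eq hval) (hle c hc)
    exact absurd (h1.trans_le h2) (lt_irrefl v)
  obtain ⟨φ, u, hO, hC⟩ := geometric_hahn_banach_open hOconv hOopen hCconv hdisj
  set e : {y // y ∈ t} → ({y // y ∈ t} → ℝ) := fun k => fun j => if k = j then 1 else 0 with he
  set lam : {y // y ∈ t} → ℝ := fun k => φ (e k) with hlam
  have hrep : ∀ z : {y // y ∈ t} → ℝ, φ z = ∑ k, z k * lam k := by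
    intro z
    conv_lhs => rw [pi_eq_sum_univ z]
    rw [map_sum]
    exact Finset.sum_congr rfl fun k _ => by rw [map_smul, smul_eq_mul]
  set base : {y // y ∈ t} → ℝ := fun _ => v + 1 with hbase
  have hbaseO : base ∈ O := fun k => by simp [hbase]
  have hlamle : ∀ k, lam k ≤ 0 := by
    intro k
    by_contra hpos
    push_neg at hpos
    have hub : φ base < u := hO base hbaseO
    set s : ℝ := (u - φ base) / lam k with hs
    have hspos : 0 < s := div_pos (sub_pos.2 hub) hpos
    have hzO : base + s • e k ∈ O := by
      intro j
      simp only [Pi.add_apply, Pi.smul_apply, hbase, he, smul_eq_mul]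
      rcases eq_or_ne k j with h | h
      · simp [h]; nlinarith
      · simp [h]
    have h5 := hO _ hzO
    rw [map_add, map_smul, smul_eq_mul] at h5
    have h6 : φ base + s * lam k < u := h5
    rw [hs, div_mul_cancel₀ _ (ne_of_gt hpos)] at h6
    linarith
  set σ : ℝ := φ (fun _ => 1) with hσ
  have hσrep : σ = ∑ k, lam k := by
    rw [hσ, hrep]; exact Finset.sum_congr rfl fun k _ => one_mul _
  obtain ⟨cw, hcw⟩ := hUne
  have hz0C : (fun k : {y // y ∈ t} => f (↑k) cw) ∈ C := ⟨cw, hcw, fun k => le_rfl⟩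
  have hσneg : σ < 0 := by
    rcases lt_or_eq_of_le (hσrep ▸ Finset.sum_nonpos fun k _ => hlamle k : σ ≤ 0) with h | h
    · exact h
    · exfalso
      have hall : ∀ k ∈ Finset.univ, lam k = 0 :=
        (Finset.sum_eq_zero_iff_of_nonpos fun k _ => hlamle k).1 (by rw [← hσrep, ← h])
      have hzero : ∀ z : {y // y ∈ t} → ℝ, φ z = 0 := by
        intro z
        rw [hrep]
        exact Finset.sum_eq_zero fun k hk => by rw [hall k hk, mul_zero]
      have h1 := hO base hbaseO
      have h2 := hC _ hz0C
      rw [hzero] at h1 h2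
      linarith
  have hvσ : v * σ ≤ u := by
    by_contra h
    push_neg at h
    set ε : ℝ := (u - v * σ) / σ with hε
    have hεpos : 0 < ε := div_pos_of_neg_of_neg (by linarith) hσneg
    have hzO : (fun _ : {y // y ∈ t} => v + ε) ∈ O := fun k => by simp; linarith
    have hcalc : φ (fun _ : {y // y ∈ t} => v + ε) = (v + ε) * σ := by
      have : (fun _ : {y // y ∈ t} => v + ε) = (v + ε) • (fun _ => (1:ℝ)) := by
        funext j; simp
      rw [this, map_smul, smul_eq_mul, ← hσ]
    have := hO _ hzO
    rw [hcalc] at this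
    have : v * σ + ε * σ < u := by linarith [this]
    rw [hε, div_mul_cancel₀ _ (ne_of_lt hσneg)] at this
    linarith
  refine ⟨fun k => lam k / σ, fun k => by
      show 0 ≤ lam k / σ
      exact div_nonneg_of_nonpos (hlamle k) hσneg.le,
    ?_, ?_⟩
  · rw [← Finset.sum_div, ← hσrep, div_self hσneg.ne]
  · intro c hc
    have hmem : (fun k : {y // y ∈ t} => f (↑k) c) ∈ C := ⟨c, hc, fun k => le_rfl⟩
    have h1 : u ≤ ∑ k : {y // y ∈ t}, f (↑k) c * lam k := by
      have := hC _ hmem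
      rwa [hrep] at this
    have h2 : v * σ ≤ ∑ k : {y // y ∈ t}, f (↑k) c * lam k := hvσ.trans h1
    have h3 : (∑ k : {y // y ∈ t}, f (↑k) c * lam k) * σ⁻¹ ≤ (v * σ) * σ⁻¹ :=
      mul_le_mul_of_nonpos_right h2 (inv_nonpos.2 hσneg.le)
    have h4 : (v * σ) * σ⁻¹ = v := by
      rw [mul_assoc, mul_inv_cancel₀ hσneg.ne, mul_one]
    calc ∑ k : {y // y ∈ t}, lam k / σ * f (↑k) c
        = (∑ k : {y // y ∈ t}, f (↑k) c * lam k) * σ⁻¹ := by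
          rw [Finset.sum_mul]
          exact Finset.sum_congr rfl fun k _ => by ring
      _ ≤ v := by rw [← h4]; exact h3

lemma exists_candidates {n m : ℕ} {U : Set (Fin m → ℝ)} (hUne : U.Nonempty)
    (hUcomp : IsCompact U) (hUconv : Convex ℝ U) {f : (Fin n → ℝ) → (Fin m → ℝ) → ℝ}
    (hfcont : Continuous fun p : (Fin n → ℝ) × (Fin m → ℝ) => f p.1 p.2)
    (hflin : ∀ c ∈ U, IsLinearMap ℝ fun y => f y c)
    (hfconc : ∀ y : Fin n → ℝ, ConcaveOn ℝ U fun c => f y c)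
    {S : Set (Fin n → ℝ)} (hSfin : S.Finite) (hSne : S.Nonempty) :
    ∃ ys : Fin (n + 1) → (Fin n → ℝ), (∀ i, ys i ∈ S) ∧
      sSup ((fun c => ⨅ i : Fin (n + 1), f (ys i) c) '' U)
        ≤ sSup ((fun c => sInf ((fun y => f y c) '' S)) '' U) := by
  classical
  set v : ℝ := sSup ((fun c => sInf ((fun y => f y c) '' S)) '' U) with hv
  set t : Finset (Fin n → ℝ) := hSfin.toFinset with ht
  have hts : (↑t : Set (Fin n → ℝ)) = S := hSfin.coe_toFinset
  have htne : t.Nonempty := by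
    rw [← Finset.coe_nonempty, hts]; exact hSne
  obtain ⟨μ, hμ0, hμ1, hμv⟩ := fan_lemma hUne hUcomp hUconv hfcont hfconc t htne
  rw [hts] at hμv
  set ystar : Fin n → ℝ := ∑ k : {y // y ∈ t}, μ k • (k : Fin n → ℝ) with hystar
  have hystarmem : ystar ∈ convexHull ℝ S := by
    have h1 : Finset.univ.centerMass μ (fun k : {y // y ∈ t} => (k : Fin n → ℝ))
        ∈ convexHull ℝ S := by
      refine Finset.centerMass_mem_convexHull _ (fun i _ => hμ0 i) (by rw [hμ1]; norm_num)
        (fun i _ => ?_)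
      rw [← hts]; exact i.2
    rwa [Finset.centerMass_eq_of_sum_1 _ _ hμ1] at h1
  obtain ⟨ι, hι, z, w, hrange, haff, hwpos, hwsum, hwz⟩ :=
    eq_pos_convex_span_of_mem_convexHull hystarmem
  -- cardinality bound
  have hcard : Fintype.card ι ≤ n + 1 := by
    have h1 := haff.card_le_finrank_succ
    have h2 : Module.finrank ℝ (vectorSpan ℝ (Set.range z)) ≤ n := by
      have := Submodule.finrank_le (vectorSpan ℝ (Set.range z))
      rwa [Module.finrank_fintype_fun_eq_card, Fintype.card_fin] at this
    omega
  have hιne : Nonempty ι := by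
    by_contra h
    rw [not_nonempty_iff] at h
    rw [Finset.univ_eq_empty, Finset.sum_empty] at hwsum
    norm_num at hwsum
  obtain ⟨g⟩ : Nonempty (ι ↪ Fin (n + 1)) := by
    rw [Function.Embedding.nonempty_iff_card_le, Fintype.card_fin]; exact hcard
  set ys : Fin (n + 1) → (Fin n → ℝ) := fun i =>
    if h : ∃ j, g j = i then z h.choose else z (Classical.arbitrary ι) with hys
  have hysmem : ∀ i, ys i ∈ S := by
    intro i
    show (if h : ∃ j, g j = i then z h.choose else z (Classical.arbitrary ι)) ∈ S
    split_ifs with h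
    · exact hrange ⟨h.choose, rfl⟩
    · exact hrange ⟨Classical.arbitrary ι, rfl⟩
  have hysg : ∀ j : ι, ys (g j) = z j := by
    intro j
    have h : ∃ j', g j' = g j := ⟨j, rfl⟩
    show (if h : ∃ j', g j' = g j then z h.choose else z (Classical.arbitrary ι)) = z j
    rw [dif_pos h]
    exact congrArg z (g.injective h.choose_spec)
  refine ⟨ys, hysmem, ?_⟩
  refine csSup_le (hUne.image _) ?_
  rintro a ⟨c, hc, rfl⟩
  set L : (Fin n → ℝ) →ₗ[ℝ] ℝ := IsLinearMap.mk' _ (hflin c hc) with hL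
  have hLval : ∀ y, L y = f y c := fun y => rfl
  have key1 : f ystar c = ∑ k : {y // y ∈ t}, μ k * f (↑k) c := by
    rw [← hLval, hystar, map_sum]
    exact Finset.sum_congr rfl fun k _ => by rw [map_smul, smul_eq_mul, hLval]
  have key2 : f ystar c = ∑ j : ι, w j * f (z j) c := by
    rw [← hLval, ← hwz, map_sum]
    exact Finset.sum_congr rfl fun j _ => by rw [map_smul, smul_eq_mul, hLval]
  have hinfle : (⨅ i : Fin (n + 1), f (ys i) c) ≤ f ystar c := by
    rw [key2]
    have hb : ∀ j : ι, (⨅ i : Fin (n + 1), f (ys i) c) ≤ f (z j) c := by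
      intro j
      have := ciInf_le
        (Set.Finite.bddBelow (Set.finite_range fun i : Fin (n + 1) => f (ys i) c)) (g j)
      rwa [hysg j] at this
    calc (⨅ i : Fin (n + 1), f (ys i) c)
        = ∑ j : ι, w j * (⨅ i : Fin (n + 1), f (ys i) c) := by
          rw [← Finset.sum_mul, hwsum, one_mul]
      _ ≤ ∑ j : ι, w j * f (z j) c :=
          Finset.sum_le_sum fun j _ => mul_le_mul_of_nonneg_left (hb j) (hwpos j).le
  have hfsle : f ystar c ≤ v := by rw [key1]; exact hμv c hc
  exact hinfle.trans hfsle

/-- **General recoverable-robust reformulation theorem.**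
A two-stage min-max-min problem over binary first- and second-stage decisions with a
compact convex uncertainty set is equivalent to choosing the first-stage solution together
with `n+1` candidate recovery solutions up front and letting the adversary face the best
of these candidates. -/
theorem recoverable_robust_reformulation (n m : ℕ)
    (X : Set (Fin n → ℝ)) (hXsub : X ⊆ {x | ∀ i, x i = 0 ∨ x i = 1})
    (hXfin : X.Finite) (hXne : X.Nonempty)
    (Xr : (Fin n → ℝ) → Set (Fin n → ℝ))
    (hXrsub : ∀ x ∈ X, Xr x ⊆ {y | ∀ i, y i = 0 ∨ y i = 1})
    (hXrne : ∀ x ∈ X, (Xr x).Nonempty)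
    (U : Set (Fin m → ℝ)) (hUne : U.Nonempty) (hUcomp : IsCompact U) (hUconv : Convex ℝ U)
    (f : (Fin n → ℝ) → (Fin m → ℝ) → ℝ)
    (hfcont : Continuous fun p : (Fin n → ℝ) × (Fin m → ℝ) => f p.1 p.2)
    (hflin : ∀ c ∈ U, IsLinearMap ℝ fun y => f y c)
    (hfconc : ∀ y : Fin n → ℝ, ConcaveOn ℝ U fun c => f y c) :
    sInf ((fun x => sSup ((fun c => sInf ((fun y => f y c) '' Xr x)) '' U)) '' X)
      = sInf {v : ℝ | ∃ x ∈ X, ∃ ys : Fin (n + 1) → (Fin n → ℝ),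
          (∀ i, ys i ∈ Xr x) ∧
          v = sSup ((fun c => ⨅ i : Fin (n + 1), f (ys i) c) '' U)} := by
  classical
  have hXrfin : ∀ x ∈ X, (Xr x).Finite := fun x hx => (cube_finite n).subset (hXrsub x hx)
  have hcont : ∀ y : Fin n → ℝ, Continuous fun c => f y c := fun y =>
    hfcont.comp (continuous_const.prodMk continuous_id)
  -- a uniform bound on f y over U for each y
  have hMax : ∀ y : Fin n → ℝ, ∃ M : ℝ, ∀ c ∈ U, f y c ≤ M := by
    intro y
    obtain ⟨c0, _, hc0⟩ := hUcomp.exists_isMaxOn hUne (hcont y).continuousOn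
    exact ⟨f y c0, fun c hc => hc0 hc⟩
  -- bddAbove for the iInf-image sets
  have hbddI : ∀ ys : Fin (n + 1) → (Fin n → ℝ),
      BddAbove ((fun c => ⨅ i : Fin (n + 1), f (ys i) c) '' U) := by
    intro ys
    obtain ⟨M, hM⟩ := hMax (ys 0)
    refine ⟨M, ?_⟩
    rintro a ⟨c, hc, rfl⟩
    exact le_trans (ciInf_le
      (Set.Finite.bddBelow (Set.finite_range fun i : Fin (n + 1) => f (ys i) c)) 0) (hM c hc)
  set RHS : Set ℝ := {v : ℝ | ∃ x ∈ X, ∃ ys : Fin (n + 1) → (Fin n → ℝ),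
      (∀ i, ys i ∈ Xr x) ∧
      v = sSup ((fun c => ⨅ i : Fin (n + 1), f (ys i) c) '' U)} with hRHS
  set val : (Fin n → ℝ) → ℝ :=
    fun x => sSup ((fun c => sInf ((fun y => f y c) '' Xr x)) '' U) with hval
  -- RHS is nonempty
  obtain ⟨x0, hx0⟩ := id hXne
  obtain ⟨y00, hy00⟩ := hXrne x0 hx0
  have hRHSne : RHS.Nonempty :=
    ⟨_, x0, hx0, fun _ => y00, fun _ => hy00, rfl⟩
  -- RHS is bounded below
  obtain ⟨c₀, hc₀⟩ := id hUne
  have hcubene : ({x : Fin n → ℝ | ∀ i, x i = 0 ∨ x i = 1}).Nonempty :=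
    ⟨fun _ => 0, fun _ => Or.inl rfl⟩
  set m0 : ℝ := sInf ((fun y => f y c₀) '' {x : Fin n → ℝ | ∀ i, x i = 0 ∨ x i = 1}) with hm0
  have hm0le : ∀ y ∈ {x : Fin n → ℝ | ∀ i, x i = 0 ∨ x i = 1}, m0 ≤ f y c₀ := fun y hy =>
    csInf_le (((cube_finite n).image _).bddBelow) ⟨y, hy, rfl⟩
  have hRHSbdd : BddBelow RHS := by
    refine ⟨m0, ?_⟩
    rintro v ⟨x, hx, ys, hys, rfl⟩
    have h1 : m0 ≤ ⨅ i : Fin (n + 1), f (ys i) c₀ :=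
      le_ciInf fun i => hm0le (ys i) (hXrsub x hx (hys i))
    exact h1.trans (le_csSup (hbddI ys) ⟨c₀, hc₀, rfl⟩)
  apply le_antisymm
  · -- LHS ≤ RHS
    refine le_csInf hRHSne ?_
    rintro v ⟨x, hx, ys, hys, rfl⟩
    have h1 : sInf (val '' X) ≤ val x := csInf_le ((hXfin.image _).bddBelow) ⟨x, hx, rfl⟩
    refine h1.trans ?_
    refine csSup_le (hUne.image _) ?_
    rintro a ⟨c, hc, rfl⟩
    have h2 : sInf ((fun y => f y c) '' Xr x) ≤ ⨅ i : Fin (n + 1), f (ys i) c :=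
      le_ciInf fun i => csInf_le (((hXrfin x hx).image _).bddBelow) ⟨ys i, hys i, rfl⟩
    exact h2.trans (le_csSup (hbddI ys) ⟨c, hc, rfl⟩)
  · -- RHS ≤ LHS
    refine le_csInf (hXne.image _) ?_
    rintro b ⟨x, hx, rfl⟩
    obtain ⟨ys, hys, hysle⟩ := exists_candidates hUne hUcomp hUconv hfcont hflin hfconc
      (hXrfin x hx) (hXrne x hx)
    exact le_trans (csInf_le hRHSbdd ⟨x, hx, ys, hys, rfl⟩) hysle
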